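/- Let H be a complex Hilbert space and K a compact self-adjoint operator on H. Let λ ∈ ℝ be a simple eigenvalue of K (i.e., ker(K − λ) is one-dimensional) with unit eigenvector e. Let ẽ ∈ H with ‖ẽ‖ = 1 and ⟨e, ẽ⟩ ≥ 0, let λ̃ ∈ ℝ, and set r = K ẽ − λ̃ ẽ. Suppose d̃ := dist(λ̃, spec(K) \ {λ}) > 0. Then ‖e − ẽ‖ ≤ 2 ‖r‖ / d̃. -/

import Mathlib

set_option maxHeartbeats 1000000


open MeasureTheory

noncomputable section

/-- Auxiliary scalar bound: the "regularized inverse" function is bounded by `1/d`. -/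
private lemma aux_inv_bound {a b d : ℝ} (hd : 0 < d) :
    |(a - b) / max ((a - b) ^ 2) (d ^ 2)| ≤ 1 / d := by
  have hM : (0:ℝ) < max ((a - b) ^ 2) (d ^ 2) := lt_max_of_lt_right (by positivity)
  rw [abs_div, abs_of_pos hM, div_le_div_iff₀ hM hd]
  nlinarith [sq_nonneg (|a - b| - d), le_max_left ((a - b) ^ 2) (d ^ 2),
    le_max_right ((a - b) ^ 2) (d ^ 2), sq_abs (a - b), abs_nonneg (a - b)]

/-- Auxiliary scalar identity: away from the singularity the regularized inverse inverts. -/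
private lemma aux_inv_mul {a b d : ℝ} (hd : 0 < d) (h : d ≤ |a - b|) :
    (a - b) / max ((a - b) ^ 2) (d ^ 2) * (a - b) = 1 := by
  have h2 : d ^ 2 ≤ (a - b) ^ 2 := by nlinarith [sq_abs (a - b), abs_nonneg (a - b)]
  have hne : a - b ≠ 0 := by
    intro h0
    rw [h0, abs_zero] at h
    linarith
  rw [max_eq_left h2]
  field_simp

/-- **Key spectral bound.**  If `K` is self-adjoint with simple eigenvalue `lam`
(eigenvector `e`), and every spectral point other than `lam` is at distance at least `d`
from `lam'`, then `K - lam'` is bounded below by `d` on the orthogonal complement of `e`. -/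
private lemma key_bound {H : Type*} [NormedAddCommGroup H] [InnerProductSpace ℂ H]
    [CompleteSpace H] (K : H →L[ℂ] H) (hK : IsSelfAdjoint K)
    (lam : ℝ) (e : H) (he : ‖e‖ = 1) (hKe : K e = (lam : ℂ) • e)
    (hsimple : ∀ v : H, K v = (lam : ℂ) • v → ∃ c : ℂ, v = c • e)
    (lam' : ℝ) {d : ℝ} (hd : 0 < d)
    (hspec : ∀ x ∈ spectrum ℝ K, x ≠ lam → d ≤ |x - lam'|)
    (w : H) (hw : (inner ℂ e w : ℂ) = 0) :
    d * ‖w‖ ≤ ‖K w - (lam' : ℂ) • w‖ := by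
  classical
  set p : ℝ → ℝ := fun x => (x - lam') / max ((x - lam') ^ 2) (d ^ 2) with hp_def
  have hp_cont : Continuous p := by
    apply Continuous.div (by fun_prop) (by fun_prop)
    intro x
    exact (lt_max_of_lt_right (by positivity : (0:ℝ) < d ^ 2)).ne'
  -- the operator `K - lam'`
  have hBapp : ∀ (μ : ℝ) (v : H),
      (K - algebraMap ℝ (H →L[ℂ] H) μ) v = K v - (μ : ℂ) • v := by
    intro μ v
    simp [Algebra.algebraMap_eq_smul_one, ContinuousLinearMap.sub_apply,
      ContinuousLinearMap.smul_apply, ContinuousLinearMap.one_apply, Complex.coe_smul]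
  have hB : cfc (fun x : ℝ => x - lam') K = K - algebraMap ℝ (H →L[ℂ] H) lam' := by
    rw [cfc_sub (R := ℝ) (fun x : ℝ => x) (fun _ => lam') K, cfc_id' ℝ K, cfc_const lam' K]
  -- final step helper
  have main : ∀ S Q : H →L[ℂ] H, ‖S‖ ≤ 1 / d → Q w = w →
      S * (K - algebraMap ℝ (H →L[ℂ] H) lam') = Q →
      d * ‖w‖ ≤ ‖K w - (lam' : ℂ) • w‖ := by
    intro S Q hS hQw hSQ
    have h1 : w = S (K w - (lam' : ℂ) • w) := by
      rw [← hBapp lam' w]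
      calc w = Q w := hQw.symm
        _ = (S * (K - algebraMap ℝ (H →L[ℂ] H) lam')) w := by rw [hSQ]
        _ = S ((K - algebraMap ℝ (H →L[ℂ] H) lam') w) := rfl
    have h2 : ‖w‖ ≤ (1 / d) * ‖K w - (lam' : ℂ) • w‖ := by
      calc ‖w‖ = ‖S (K w - (lam' : ℂ) • w)‖ := by rw [← h1]
        _ ≤ ‖S‖ * ‖K w - (lam' : ℂ) • w‖ := S.le_opNorm _
        _ ≤ (1 / d) * ‖K w - (lam' : ℂ) • w‖ := by
            exact mul_le_mul_of_nonneg_right hS (norm_nonneg _)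
    have h3 := mul_le_mul_of_nonneg_left h2 hd.le
    calc d * ‖w‖ ≤ d * ((1 / d) * ‖K w - (lam' : ℂ) • w‖) := h3
      _ = ‖K w - (lam' : ℂ) • w‖ := by field_simp
  rcases le_or_gt d |lam - lam'| with hcase | hcase
  · -- Case A : `lam` itself is far from `lam'`; then `K - lam'` is invertible.
    apply main (cfc p K) 1
    · apply norm_cfc_le (by positivity)
      intro x _
      simpa [Real.norm_eq_abs] using aux_inv_bound (a := x) (b := lam') hd
    · simp
    · rw [← hB, ← cfc_mul p (fun x : ℝ => x - lam') K hp_cont.continuousOn (by fun_prop)]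
      have heq : Set.EqOn (fun x : ℝ => p x * (x - lam')) (fun _ => (1:ℝ)) (spectrum ℝ K) := by
        intro x hx
        by_cases hxl : x = lam
        · exact hxl ▸ aux_inv_mul hd hcase
        · exact aux_inv_mul hd (hspec x hx hxl)
      rw [cfc_congr heq, cfc_const_one ℝ K]
  · -- Case B : `lam` is close to `lam'`, hence isolated in the spectrum.
    set δ : ℝ := d - |lam - lam'| with hδdef
    have hδ : 0 < δ := by simp only [hδdef]; linarith
    set h : ℝ → ℝ := fun x => (x - lam) / max ((x - lam) ^ 2) (δ ^ 2) with hh_def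
    have hh_cont : Continuous h := by
      apply Continuous.div (by fun_prop) (by fun_prop)
      intro x
      exact (lt_max_of_lt_right (by positivity : (0:ℝ) < δ ^ 2)).ne'
    set g : ℝ → ℝ := fun x => h x * (x - lam) with hg_def
    have hg_cont : Continuous g := by fun_prop
    set f : ℝ → ℝ := fun x => g x * p x with hf_def
    have hf_cont : Continuous f := by fun_prop
    have hA' : cfc (fun x : ℝ => x - lam) K = K - algebraMap ℝ (H →L[ℂ] H) lam := by
      rw [cfc_sub (R := ℝ) (fun x : ℝ => x) (fun _ => lam) K, cfc_id' ℝ K, cfc_const lam K]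
    have hAe : (K - algebraMap ℝ (H →L[ℂ] H) lam) e = 0 := by
      rw [hBapp lam e, hKe, sub_self]
    set Q : H →L[ℂ] H := cfc g K with hQ
    have hQe : Q e = 0 := by
      rw [hQ, hg_def,
        cfc_mul h (fun x : ℝ => x - lam) K hh_cont.continuousOn (by fun_prop), hA',
        ContinuousLinearMap.mul_apply, hAe, map_zero]
    have hgap : ∀ x ∈ spectrum ℝ K, x ≠ lam → δ ≤ |x - lam| := by
      intro x hx hxl
      have h1 := hspec x hx hxl
      have h2 : |x - lam'| - |lam - lam'| ≤ |x - lam| := by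
        have := abs_sub_abs_le_abs_sub (x - lam') (lam - lam')
        have h3 : (x - lam') - (lam - lam') = x - lam := by ring
        rwa [h3] at this
      simp only [hδdef]
      linarith
    have hgone : ∀ x ∈ spectrum ℝ K, x ≠ lam → g x = 1 := by
      intro x hx hxl
      simp only [hg_def, hh_def]
      exact aux_inv_mul hδ (hgap x hx hxl)
    have hglam : g lam = 0 := by simp [hg_def]
    have hA1Q : (K - algebraMap ℝ (H →L[ℂ] H) lam) * (1 - Q) = 0 := by
      have h1mQ : (1 : H →L[ℂ] H) - Q = cfc (fun x : ℝ => 1 - g x) K := by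
        rw [cfc_sub (R := ℝ) (fun _ => (1:ℝ)) g K (by fun_prop) hg_cont.continuousOn, cfc_const_one ℝ K, hQ]
      rw [← hA', h1mQ,
        ← cfc_mul (fun x : ℝ => x - lam) (fun x : ℝ => 1 - g x) K (by fun_prop) (by fun_prop)]
      have heq : Set.EqOn (fun x : ℝ => (x - lam) * (1 - g x)) (fun _ => (0:ℝ))
          (spectrum ℝ K) := by
        intro x hx
        by_cases hxl : x = lam
        · simp [hxl]
        · simp [hgone x hx hxl]
      rw [cfc_congr heq, cfc_const_zero ℝ K]
    have hQw : Q w = w := by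
      have h0 : (K - algebraMap ℝ (H →L[ℂ] H) lam) (w - Q w) = 0 := by
        have e1 : (w - Q w) = ((1 : H →L[ℂ] H) - Q) w := by
          simp [ContinuousLinearMap.sub_apply]
        rw [e1, ← ContinuousLinearMap.mul_apply, hA1Q, ContinuousLinearMap.zero_apply]
      have hKu : K (w - Q w) = (lam : ℂ) • (w - Q w) := by
        have := hBapp lam (w - Q w)
        rw [h0] at this
        exact (sub_eq_zero.mp this.symm)
      obtain ⟨c, hc⟩ := hsimple _ hKu
      have hQsa : IsSelfAdjoint Q := cfc_predicate g K
      have h3 : (inner ℂ e (Q w) : ℂ) = 0 := by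
        conv_lhs => rw [← ContinuousLinearMap.isSelfAdjoint_iff'.mp hQsa]
        rw [ContinuousLinearMap.adjoint_inner_right, hQe, inner_zero_left]
      have h4 : (inner ℂ e (w - Q w) : ℂ) = 0 := by
        rw [inner_sub_right, hw, h3, sub_zero]
      rw [hc, inner_smul_right, inner_self_eq_norm_sq_to_K, he] at h4
      have hc0 : c = 0 := by simpa using h4
      have : w - Q w = 0 := by rw [hc, hc0, zero_smul]
      exact (sub_eq_zero.mp this).symm
    apply main (cfc f K) Q _ hQw
    · rw [← hB, ← cfc_mul f (fun x : ℝ => x - lam') K hf_cont.continuousOn (by fun_prop), hQ]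
      apply cfc_congr
      intro x hx
      by_cases hxl : x = lam
      · subst hxl
        show g x * p x * (x - lam') = g x
        rw [hglam]
        ring
      · have h2 : p x * (x - lam') = 1 := aux_inv_mul hd (hspec x hx hxl)
        show g x * p x * (x - lam') = g x
        rw [mul_assoc, h2, mul_one]
    · apply norm_cfc_le (by positivity)
      intro x _
      have hg1 : |g x| ≤ 1 := by
        have hgx : g x = (x - lam) ^ 2 / max ((x - lam) ^ 2) (δ ^ 2) := by
          simp only [hg_def, hh_def]
          ring
        have hM : (0:ℝ) < max ((x - lam) ^ 2) (δ ^ 2) := lt_max_of_lt_right (by positivity)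
        rw [hgx, abs_div, abs_of_pos hM, abs_of_nonneg (sq_nonneg _), div_le_one hM]
        exact le_max_left _ _
      have hp1 : |p x| ≤ 1 / d := aux_inv_bound hd
      calc ‖f x‖ = |g x| * |p x| := by rw [Real.norm_eq_abs, hf_def, abs_mul]
        _ ≤ 1 * (1 / d) := mul_le_mul hg1 hp1 (abs_nonneg _) zero_le_one
        _ = 1 / d := one_mul _

/-- **Eigenvector accuracy estimate for a simple eigenvalue of a compact self-adjoint
operator.**  Let `K` be compact self-adjoint on a complex Hilbert space, `λ ∈ ℝ` a
simple eigenvalue with unit eigenvector `e`.  Let `ẽ` be a unit vector with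
`⟨e, ẽ⟩ ≥ 0` (a nonnegative real number), `λ̃ ∈ ℝ`, and `r = K ẽ − λ̃ ẽ`.  If
`d̃ = dist(λ̃, spec K \ {λ}) > 0`, then `‖e − ẽ‖ ≤ 2 ‖r‖ / d̃`. -/
theorem eigenvector_accuracy_simple
    {H : Type*} [NormedAddCommGroup H] [InnerProductSpace ℂ H] [CompleteSpace H]
    (K : H →L[ℂ] H) (hK : IsSelfAdjoint K) (hKcomp : IsCompactOperator K)
    (lam : ℝ) (e : H) (he : ‖e‖ = 1) (hKe : K e = (lam : ℂ) • e)
    (hsimple : ∀ v : H, K v = (lam : ℂ) • v → ∃ c : ℂ, v = c • e)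
    (e' : H) (he' : ‖e'‖ = 1)
    (hphase : ∃ t : ℝ, 0 ≤ t ∧ (inner ℂ e e' : ℂ) = (t : ℂ))
    (lam' : ℝ) (r : H) (hr : r = K e' - (lam' : ℂ) • e')
    (hd : 0 < Metric.infDist (lam' : ℂ) (spectrum ℂ K \ {(lam : ℂ)})) :
    ‖e - e'‖ ≤ 2 * ‖r‖ / Metric.infDist (lam' : ℂ) (spectrum ℂ K \ {(lam : ℂ)}) := by
  classical
  set d : ℝ := Metric.infDist (lam' : ℂ) (spectrum ℂ K \ {(lam : ℂ)}) with hd_def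
  have hspec : ∀ x ∈ spectrum ℝ K, x ≠ lam → d ≤ |x - lam'| := by
    intro x hx hxl
    have hxC : ((x : ℝ) : ℂ) ∈ spectrum ℂ K := by
      have := spectrum.algebraMap_mem (R := ℝ) (S := ℂ) (A := H →L[ℂ] H) hx
      simpa using this
    have hmem : ((x : ℝ) : ℂ) ∈ spectrum ℂ K \ {(lam : ℂ)} := by
      refine ⟨hxC, ?_⟩
      simp only [Set.mem_singleton_iff]
      exact fun hcon => hxl (by exact_mod_cast hcon)
    calc d ≤ dist (lam' : ℂ) ((x : ℝ) : ℂ) := Metric.infDist_le_dist_of_mem hmem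
      _ = |x - lam'| := by
          rw [Complex.dist_eq, ← Complex.ofReal_sub, Complex.norm_real, Real.norm_eq_abs, abs_sub_comm]
  obtain ⟨t, ht0, hte⟩ := hphase
  set w : H := e' - (t : ℂ) • e with hw_def
  have hee : (inner ℂ e e : ℂ) = 1 := by
    rw [inner_self_eq_norm_sq_to_K, he]
    norm_num
  have hew : (inner ℂ e w : ℂ) = 0 := by
    rw [hw_def, inner_sub_right, inner_smul_right, hte, hee, mul_one, sub_self]
  have ht1 : t ≤ 1 := by
    have h1 : ‖(inner ℂ e e' : ℂ)‖ ≤ 1 := by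
      simpa [he, he'] using norm_inner_le_norm (𝕜 := ℂ) e e'
    rw [hte] at h1
    rw [Complex.norm_real, Real.norm_eq_abs, abs_of_nonneg ht0] at h1
    exact h1
  have hwn : ‖w‖ ^ 2 = 1 - t ^ 2 := by
    have he'w : e' = (t : ℂ) • e + w := by rw [hw_def]; abel
    have hinner : (inner ℂ ((t : ℂ) • e) w : ℂ) = 0 := by
      rw [inner_smul_left, hew, mul_zero]
    have hns : ‖(t : ℂ) • e‖ = t := by
      rw [norm_smul, he, Complex.norm_real, Real.norm_eq_abs, abs_of_nonneg ht0, mul_one]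
    have := norm_add_sq (𝕜 := ℂ) ((t : ℂ) • e) w
    rw [hinner, ← he'w, he', hns] at this
    simp only [map_zero, mul_zero, add_zero] at this
    nlinarith [this]
  -- bound ‖w‖ via the key spectral estimate
  have hKw_perp : (inner ℂ e (K w - (lam' : ℂ) • w) : ℂ) = 0 := by
    have hKwe : (inner ℂ e (K w) : ℂ) = 0 := by
      conv_lhs => rw [← ContinuousLinearMap.isSelfAdjoint_iff'.mp hK]
      rw [ContinuousLinearMap.adjoint_inner_right, hKe, inner_smul_left, hew, mul_zero]
    rw [inner_sub_right, hKwe, inner_smul_right, hew, mul_zero, sub_zero]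
  have hr_decomp : r = (K w - (lam' : ℂ) • w) + ((t : ℂ) * ((lam : ℂ) - (lam' : ℂ))) • e := by
    rw [hr, hw_def, map_sub, K.map_smul, hKe]
    module
  have hKw_le : ‖K w - (lam' : ℂ) • w‖ ≤ ‖r‖ := by
    have hinner : (inner ℂ (K w - (lam' : ℂ) • w) (((t : ℂ) * ((lam : ℂ) - (lam' : ℂ))) • e) : ℂ)
        = 0 := by
      rw [inner_smul_right, ← inner_conj_symm, hKw_perp, map_zero, mul_zero]
    have hsq := norm_add_sq (𝕜 := ℂ) (K w - (lam' : ℂ) • w)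
      (((t : ℂ) * ((lam : ℂ) - (lam' : ℂ))) • e)
    rw [hinner, ← hr_decomp] at hsq
    simp only [map_zero, mul_zero, add_zero] at hsq
    nlinarith [norm_nonneg (K w - (lam' : ℂ) • w), norm_nonneg r,
      norm_nonneg (((t : ℂ) * ((lam : ℂ) - (lam' : ℂ))) • e), sq_nonneg
      (‖K w - (lam' : ℂ) • w‖ + ‖r‖)]
  have hkey := key_bound K hK lam e he hKe hsimple lam' hd hspec w hew
  have hw_le : d * ‖w‖ ≤ ‖r‖ := le_trans hkey hKw_le
  -- final computation
  have hen : ‖e - e'‖ ^ 2 = 2 * (1 - t) := by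
    have hee' : e - e' = ((1 - t : ℝ) : ℂ) • e - w := by
      rw [hw_def]
      push_cast
      module
    have hinner : (inner ℂ (((1 - t : ℝ) : ℂ) • e) w : ℂ) = 0 := by
      rw [inner_smul_left, hew, mul_zero]
    have hns : ‖((1 - t : ℝ) : ℂ) • e‖ = 1 - t := by
      rw [norm_smul, he, Complex.norm_real, Real.norm_eq_abs, abs_of_nonneg (by linarith),
        mul_one]
    have := norm_sub_sq (𝕜 := ℂ) (((1 - t : ℝ) : ℂ) • e) w
    rw [hinner, ← hee', hns] at this
    simp only [map_zero, mul_zero, sub_zero] at this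
    nlinarith [this, hwn]
  have hsq : ‖e - e'‖ ^ 2 ≤ (2 * ‖r‖ / d) ^ 2 := by
    have h1 : 1 - t ≤ 1 - t ^ 2 := by nlinarith
    have h2 : ‖w‖ ≤ ‖r‖ / d := by
      rw [le_div_iff₀ hd]
      linarith [hw_le, mul_comm d ‖w‖]
    have h3 : ‖w‖ ^ 2 ≤ (‖r‖ / d) ^ 2 := by
      have := norm_nonneg w
      nlinarith
    have h4 : (2 * ‖r‖ / d) ^ 2 = 4 * (‖r‖ / d) ^ 2 := by ring
    rw [hen, h4]
    nlinarith [hwn, h1, h3]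
  have hnn : 0 ≤ 2 * ‖r‖ / d := by positivity
  nlinarith [hsq, norm_nonneg (e - e'), hnn, sq_nonneg (‖e - e'‖ + 2 * ‖r‖ / d)]

end
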